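/- Suppose each φ_i is convex, differentiable, and L_i-smooth, F(w) = (1/n)∑φ_i(w) + (λ/2)‖w‖² with minimizer w*, and α*_i = -∇φ_i(w*). With q_i = (L_i + L̄)/(2nL̄), then ∑_i (1/q_i)·‖∇φ_i(w) - ∇φ_i(w*)‖² ≤ 4n²L̄·(F(w) - F(w*)) for every w. -/

import Mathlib

open Set RealInnerProductSpace

variable {E : Type*} [NormedAddCommGroup E] [InnerProductSpace ℝ E] [CompleteSpace E]

lemma hasGradientAt_of_diff {f : E → ℝ} (hf : Differentiable ℝ f) (x : E) :
    HasGradientAt f (gradient f x) x := (hf x).hasGradientAt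

lemma hasDerivAt_line {f : E → ℝ} (hf : Differentiable ℝ f) (x v : E) (t : ℝ) :
    HasDerivAt (fun s : ℝ => f (x + s • v)) ⟪gradient f (x + t • v), v⟫ t := by
  have hline : HasDerivAt (fun s : ℝ => x + s • v) v t := by
    simpa using ((hasDerivAt_id t).smul_const v).const_add x
  have hg := (hf (x + t • v)).hasGradientAt
  rw [hasGradientAt_iff_hasFDerivAt] at hg
  have := hg.comp_hasDerivAt t hline
  simpa [Function.comp_def] using this

lemma convex_grad_ineq {f : E → ℝ} (hconv : ConvexOn ℝ univ f) (hf : Differentiable ℝ f)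
    (x y : E) : f x + ⟪gradient f x, y - x⟫ ≤ f y := by
  set g : ℝ → ℝ := fun s => f (x + s • (y - x)) with hg
  have hgconv : ConvexOn ℝ univ g := by
    have : g = f ∘ (AffineMap.lineMap x y) := by
      funext s
      simp [hg, AffineMap.lineMap_apply, add_comm]
    rw [this]
    have := hconv.comp_affineMap (AffineMap.lineMap x y)
    simpa using this
  have hd : HasDerivAt g ⟪gradient f x, y - x⟫ 0 := by
    simpa using hasDerivAt_line hf x (y - x) 0
  have := hgconv.le_slope_of_hasDerivAt (mem_univ (0:ℝ)) (mem_univ (1:ℝ)) one_pos hd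
  rw [slope_def_field] at this
  have hg0 : g 0 = f x := by simp [hg]
  have hg1 : g 1 = f y := by simp [hg]
  simp only [hg0, hg1, sub_zero, div_one] at this
  linarith

lemma descent_lemma {f : E → ℝ} (hf : Differentiable ℝ f) {L : ℝ} (hL : 0 < L)
    (hlip : LipschitzWith L.toNNReal (gradient f)) (x y : E) :
    f y ≤ f x + ⟪gradient f x, y - x⟫ + L / 2 * ‖y - x‖ ^ 2 := by
  set v := y - x with hv
  set g' : ℝ → ℝ := fun t => ⟪gradient f (x + t • v), v⟫ with hg'
  have hderiv : ∀ t ∈ Set.uIcc (0:ℝ) 1, HasDerivAt (fun s : ℝ => f (x + s • v)) (g' t) t :=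
    fun t _ => hasDerivAt_line hf x v t
  have hcont : Continuous g' := by
    apply Continuous.inner
    · exact (hlip.continuous).comp (by continuity)
    · exact continuous_const
  have hint : IntervalIntegrable g' MeasureTheory.volume 0 1 := hcont.intervalIntegrable 0 1
  have hftc : ∫ t in (0:ℝ)..1, g' t = f (x + (1:ℝ) • v) - f (x + (0:ℝ) • v) :=
    intervalIntegral.integral_eq_sub_of_hasDerivAt hderiv hint
  have hxy : f y - f x = ∫ t in (0:ℝ)..1, g' t := by
    rw [hftc]; simp [hv]
  -- pointwise bound : g' t - g' 0 ≤ L * ‖v‖^2 * t  on [0,1]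
  have hpt : ∀ t ∈ Set.Icc (0:ℝ) 1, g' t ≤ g' 0 + L * ‖v‖ ^ 2 * t := by
    intro t ht
    have h1 : g' t - g' 0 = ⟪gradient f (x + t • v) - gradient f x, v⟫ := by
      simp [hg', inner_sub_left]
    have h2 : ⟪gradient f (x + t • v) - gradient f x, v⟫ ≤
        ‖gradient f (x + t • v) - gradient f x‖ * ‖v‖ := real_inner_le_norm _ _
    have h3 : ‖gradient f (x + t • v) - gradient f x‖ ≤ L * (t * ‖v‖) := by
      have := hlip.dist_le_mul (x + t • v) x
      rw [Real.coe_toNNReal L hL.le] at this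
      rw [← dist_eq_norm]
      calc dist (gradient f (x + t • v)) (gradient f x) ≤ L * dist (x + t • v) x := this
        _ = L * (t * ‖v‖) := by
            rw [dist_eq_norm]
            simp [norm_smul, abs_of_nonneg ht.1]
    nlinarith [norm_nonneg v, ht.1, h2, h3, h1]
  have hmono : ∫ t in (0:ℝ)..1, g' t ≤ ∫ t in (0:ℝ)..1, (g' 0 + L * ‖v‖ ^ 2 * t) := by
    apply intervalIntegral.integral_mono_on zero_le_one hint
    · exact (continuous_const.add (continuous_const.mul continuous_id)).intervalIntegrable 0 1
    · exact hpt
  have hrhs : ∫ t in (0:ℝ)..1, (g' 0 + L * ‖v‖ ^ 2 * t) = g' 0 + L / 2 * ‖v‖ ^ 2 := by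
    have hii : IntervalIntegrable (fun t : ℝ => L * ‖v‖ ^ 2 * t) MeasureTheory.volume 0 1 := by
      apply Continuous.intervalIntegrable; continuity
    rw [intervalIntegral.integral_add (intervalIntegrable_const) hii]
    have h1 : ∫ t in (0:ℝ)..1, L * ‖v‖ ^ 2 * t = L * ‖v‖ ^ 2 * ∫ t in (0:ℝ)..1, t :=
      intervalIntegral.integral_const_mul _ _
    rw [h1, integral_id]
    simp; ring
  have hg0 : g' 0 = ⟪gradient f x, y - x⟫ := by simp [hg', hv]
  have hfin := hmono.trans_eq hrhs
  rw [hg0] at hfin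
  have hn : ‖v‖ = ‖y - x‖ := by rw [hv]
  rw [hn] at hfin
  linarith [hxy, hfin]

lemma hasGradientAt_inner_const (a : E) (z : E) :
    HasGradientAt (fun w : E => ⟪a, w⟫) a z := by
  rw [hasGradientAt_iff_hasFDerivAt]
  have h : HasFDerivAt (fun w : E => ⟪a, w⟫) (innerSL ℝ a) z := (innerSL ℝ a).hasFDerivAt
  exact h

lemma cocoercivity {f : E → ℝ} (hconv : ConvexOn ℝ univ f) (hf : Differentiable ℝ f)
    {L : ℝ} (hL : 0 < L) (hlip : LipschitzWith L.toNNReal (gradient f)) (x y : E) :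
    ‖gradient f x - gradient f y‖ ^ 2 ≤ 2 * L * (f x - f y - ⟪gradient f y, x - y⟫) := by
  set a := gradient f y with ha
  set h : E → ℝ := fun z => f z - ⟪a, z⟫ with hh
  have hgrad : ∀ z, HasGradientAt h (gradient f z - a) z := by
    intro z
    have h1 := (hf z).hasGradientAt
    have h2 := hasGradientAt_inner_const a z
    rw [hasGradientAt_iff_hasFDerivAt] at h1 h2 ⊢
    rw [map_sub]
    exact h1.sub h2
  have hgradeq : ∀ z, gradient h z = gradient f z - a := fun z => (hgrad z).gradient
  have hhdiff : Differentiable ℝ h :=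
    fun z => (hf z).sub ((innerSL ℝ a).differentiableAt)
  have hhlip : LipschitzWith L.toNNReal (gradient h) := by
    have : gradient h = fun z => gradient f z - a := funext hgradeq
    rw [this]
    apply LipschitzWith.of_dist_le_mul
    intro z w
    rw [dist_sub_right]
    exact hlip.dist_le_mul z w
  have hhconv : ConvexOn ℝ univ h := by
    apply hconv.sub
    refine ⟨convex_univ, fun p _ r _ s _ hs hrs => ?_⟩
    simp [inner_add_right, inner_smul_right]
  -- y minimizes h
  have hymin : ∀ z, h y ≤ h z := by
    intro z
    have := convex_grad_ineq hhconv hhdiff y z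
    rw [hgradeq y] at this
    simpa [ha] using this
  -- descent step from x
  have hdes := descent_lemma hhdiff hL hhlip x (x - (1 / L) • (gradient h x))
  have hkey : h (x - (1 / L) • (gradient h x)) ≤ h x - 1 / (2 * L) * ‖gradient h x‖ ^ 2 := by
    have e1 : x - (1 / L) • (gradient h x) - x = -((1 / L) • (gradient h x)) := by abel
    rw [e1] at hdes
    have e2 : ⟪gradient h x, -((1 / L) • gradient h x)⟫ = -(1 / L) * ‖gradient h x‖ ^ 2 := by
      rw [inner_neg_right, real_inner_smul_right, real_inner_self_eq_norm_sq]
      ring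
    have e3 : ‖-((1 / L) • gradient h x)‖ ^ 2 = (1 / L) ^ 2 * ‖gradient h x‖ ^ 2 := by
      rw [norm_neg, norm_smul, Real.norm_eq_abs, abs_of_pos (by positivity : (0:ℝ) < 1 / L)]
      ring
    rw [e2, e3] at hdes
    have hLne : L ≠ 0 := hL.ne'
    calc h (x - (1 / L) • gradient h x) ≤
        h x + -(1 / L) * ‖gradient h x‖ ^ 2 + L / 2 * ((1 / L) ^ 2 * ‖gradient h x‖ ^ 2) := hdes
      _ = h x - 1 / (2 * L) * ‖gradient h x‖ ^ 2 := by field_simp; ring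
  have hfinal := (hymin _).trans hkey
  -- h x - h y = f x - f y - ⟪a, x - y⟫
  have hdiffval : h x - h y = f x - f y - ⟪a, x - y⟫ := by
    simp [hh, inner_sub_right]; ring
  have hgx : gradient h x = gradient f x - a := hgradeq x
  rw [hgx] at hfinal
  have h2L : (0:ℝ) < 2 * L := by positivity
  have hstep : 1 / (2 * L) * ‖gradient f x - a‖ ^ 2 ≤ h x - h y := by linarith
  calc ‖gradient f x - a‖ ^ 2 = 2 * L * (1 / (2 * L) * ‖gradient f x - a‖ ^ 2) := by
        field_simp
    _ ≤ 2 * L * (h x - h y) := mul_le_mul_of_nonneg_left hstep h2L.le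
    _ = 2 * L * (f x - f y - ⟪a, x - y⟫) := by rw [hdiffval]



theorem grad_diff_sum_bound_convex
    (d n : ℕ) (hn : 1 ≤ n) (lam : ℝ) (hlam : 0 < lam)
    (φ : Fin n → EuclideanSpace ℝ (Fin d) → ℝ)
    (L : Fin n → ℝ) (hL : ∀ i, 0 < L i)
    (hconv : ∀ i, ConvexOn ℝ Set.univ (φ i))
    (hdiff : ∀ i, Differentiable ℝ (φ i))
    (hlip : ∀ i, LipschitzWith (L i).toNNReal (gradient (φ i)))
    (Lbar : ℝ) (hLbar : Lbar = (1 / (n : ℝ)) * ∑ i, L i)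
    (F : EuclideanSpace ℝ (Fin d) → ℝ)
    (hF : ∀ v, F v = (1 / (n : ℝ)) * ∑ i, φ i v + lam / 2 * ‖v‖ ^ 2)
    (wstar : EuclideanSpace ℝ (Fin d)) (hmin : ∀ v, F wstar ≤ F v)
    (q : Fin n → ℝ) (hq : ∀ i, q i = (L i + Lbar) / (2 * n * Lbar)) :
    ∀ w : EuclideanSpace ℝ (Fin d),
      ∑ i, (1 / q i) * ‖gradient (φ i) w - gradient (φ i) wstar‖ ^ 2 ≤
        4 * n ^ 2 * Lbar * (F w - F wstar) := by
  intro w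
  have hn' : (0:ℝ) < n := by exact_mod_cast Nat.lt_of_lt_of_le Nat.zero_lt_one hn
  haveI : Nonempty (Fin n) := ⟨⟨0, hn⟩⟩
  have hLbarpos : 0 < Lbar := by
    rw [hLbar]
    have : 0 < ∑ i, L i := Finset.sum_pos (fun i _ => hL i) Finset.univ_nonempty
    positivity
  set S : EuclideanSpace ℝ (Fin d) := ∑ i, gradient (φ i) wstar with hS
  -- stationarity: directional derivatives vanish
  have hinner : ∀ v : EuclideanSpace ℝ (Fin d),
      (1 / (n:ℝ)) * ⟪S, v⟫ + lam * ⟪wstar, v⟫ = 0 := by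
    intro v
    set g : ℝ → ℝ := fun t => F (wstar + t • v) with hg
    have hd1 : HasDerivAt (fun t : ℝ => (1 / (n:ℝ)) * ∑ i, φ i (wstar + t • v))
        ((1 / (n:ℝ)) * ∑ i, ⟪gradient (φ i) wstar, v⟫) 0 := by
      apply HasDerivAt.const_mul
      apply HasDerivAt.fun_sum
      intro i _
      simpa using hasDerivAt_line (hdiff i) wstar v 0
    have hexp : ∀ t : ℝ, ‖wstar + t • v‖ ^ 2
        = ‖wstar‖ ^ 2 + 2 * ⟪wstar, v⟫ * t + ‖v‖ ^ 2 * t ^ 2 := by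
      intro t
      rw [norm_add_sq_real, real_inner_smul_right, norm_smul, Real.norm_eq_abs,
        mul_pow, sq_abs]
      ring
    have hd2 : HasDerivAt (fun t : ℝ => lam / 2 * ‖wstar + t • v‖ ^ 2) (lam * ⟪wstar, v⟫) 0 := by
      have heq : (fun t : ℝ => lam / 2 * ‖wstar + t • v‖ ^ 2)
          = fun t : ℝ => lam / 2 * (‖wstar‖ ^ 2 + 2 * ⟪wstar, v⟫ * t + ‖v‖ ^ 2 * t ^ 2) := by
        funext t; rw [hexp t]
      rw [heq]
      have h1 : HasDerivAt (fun t : ℝ => ‖wstar‖ ^ 2 + 2 * ⟪wstar, v⟫ * t + ‖v‖ ^ 2 * t ^ 2)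
          (2 * ⟪wstar, v⟫ + ‖v‖ ^ 2 * (2 * 0)) 0 := by
        have ha : HasDerivAt (fun t : ℝ => 2 * ⟪wstar, v⟫ * t) (2 * ⟪wstar, v⟫) 0 := by
          simpa using (hasDerivAt_id (0:ℝ)).const_mul (2 * ⟪wstar, v⟫)
        have hb : HasDerivAt (fun t : ℝ => ‖v‖ ^ 2 * t ^ 2) (‖v‖ ^ 2 * (2 * 0)) 0 := by
          have := (hasDerivAt_pow 2 (0:ℝ)).const_mul (‖v‖ ^ 2)
          simpa using this
        simpa using (ha.const_add (‖wstar‖ ^ 2)).fun_add hb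
      have := h1.const_mul (lam / 2)
      exact this.congr_deriv (by ring)
    have hgd : HasDerivAt g ((1 / (n:ℝ)) * ∑ i, ⟪gradient (φ i) wstar, v⟫ + lam * ⟪wstar, v⟫) 0 := by
      have : g = fun t : ℝ => (1 / (n:ℝ)) * ∑ i, φ i (wstar + t • v)
          + lam / 2 * ‖wstar + t • v‖ ^ 2 := by
        funext t; rw [hg]; exact hF _
      rw [this]
      exact hd1.add hd2
    have hloc : IsLocalMin g 0 := by
      apply Filter.Eventually.of_forall
      intro t
      have h0 : g 0 = F wstar := by simp [hg]
      rw [h0]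
      exact hmin _
    have hzero := hloc.hasDerivAt_eq_zero hgd
    have hsum : ⟪S, v⟫ = ∑ i, ⟪gradient (φ i) wstar, v⟫ := by
      rw [hS]; exact sum_inner _ _ _
    rw [hsum]
    exact hzero ▸ rfl
  set u : EuclideanSpace ℝ (Fin d) := w - wstar with hu
  set B : Fin n → ℝ := fun i => φ i w - φ i wstar - ⟪gradient (φ i) wstar, u⟫ with hB
  have hB0 : ∀ i, 0 ≤ B i := by
    intro i
    have := convex_grad_ineq (hconv i) (hdiff i) wstar w
    rw [hB]; simp only [hu]
    linarith
  have hBcoco : ∀ i, ‖gradient (φ i) w - gradient (φ i) wstar‖ ^ 2 ≤ 2 * L i * B i := by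
    intro i
    have := cocoercivity (hconv i) (hdiff i) (hL i) (hlip i) w wstar
    rw [hB]; simp only [hu]
    linarith
  -- per-index bound
  have hper : ∀ i, (1 / q i) * ‖gradient (φ i) w - gradient (φ i) wstar‖ ^ 2
      ≤ 4 * n * Lbar * B i := by
    intro i
    have hpos : 0 < L i + Lbar := by linarith [hL i, hLbarpos]
    have hiq : 1 / q i = 2 * n * Lbar / (L i + Lbar) := by
      rw [hq i, one_div_div]
    have hiqpos : 0 ≤ 1 / q i := by
      rw [hiq]; positivity
    calc (1 / q i) * ‖gradient (φ i) w - gradient (φ i) wstar‖ ^ 2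
        ≤ (1 / q i) * (2 * L i * B i) := mul_le_mul_of_nonneg_left (hBcoco i) hiqpos
      _ = 2 * (n:ℝ) * Lbar * (2 * L i * B i) / (L i + Lbar) := by
          rw [hiq]; ring
      _ ≤ 4 * n * Lbar * B i := by
          rw [div_le_iff₀ hpos]
          nlinarith [mul_nonneg (mul_nonneg hn'.le (mul_nonneg hLbarpos.le hLbarpos.le)) (hB0 i)]
  have hsum1 : ∑ i, (1 / q i) * ‖gradient (φ i) w - gradient (φ i) wstar‖ ^ 2
      ≤ 4 * n * Lbar * ∑ i, B i := by
    rw [Finset.mul_sum]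
    exact Finset.sum_le_sum (fun i _ => hper i)
  -- sum of Bregman divergences vs F-gap
  have hSB : ∑ i, B i = ∑ i, φ i w - ∑ i, φ i wstar - ⟪S, u⟫ := by
    rw [hB, hS]
    rw [sum_inner]
    rw [Finset.sum_sub_distrib, Finset.sum_sub_distrib]
  have hSu : ⟪S, u⟫ = -((n:ℝ) * lam * ⟪wstar, u⟫) := by
    have h := hinner u
    have hne : (n:ℝ) ≠ 0 := hn'.ne'
    set a : ℝ := ⟪S, u⟫ with hA
    set b : ℝ := ⟪wstar, u⟫ with hBb
    have h2 : (n:ℝ) * (1 / (n:ℝ) * a + lam * b) = 0 := by rw [h]; ring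
    have h3 : (n:ℝ) * (1 / (n:ℝ) * a) = a := by field_simp
    nlinarith [h2, h3]
  have hnormw : ‖w‖ ^ 2 = ‖wstar‖ ^ 2 + 2 * ⟪wstar, u⟫ + ‖u‖ ^ 2 := by
    have : w = wstar + u := by rw [hu]; abel
    rw [this, norm_add_sq_real]
  have hgap : ∑ i, B i ≤ (n:ℝ) * (F w - F wstar) := by
    have hFw := hF w
    have hFws := hF wstar
    have hkey : (n:ℝ) * (F w - F wstar)
        = ∑ i, φ i w - ∑ i, φ i wstar + (n:ℝ) * lam / 2 * (‖w‖ ^ 2 - ‖wstar‖ ^ 2) := by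
      rw [hFw, hFws]
      field_simp
      ring
    rw [hSB, hSu, hkey, hnormw]
    have hx : (0:ℝ) ≤ (n:ℝ) * lam * ‖u‖ ^ 2 :=
      mul_nonneg (mul_nonneg hn'.le hlam.le) (sq_nonneg ‖u‖)
    linarith [hx]
  calc ∑ i, (1 / q i) * ‖gradient (φ i) w - gradient (φ i) wstar‖ ^ 2
      ≤ 4 * n * Lbar * ∑ i, B i := hsum1
    _ ≤ 4 * n * Lbar * ((n:ℝ) * (F w - F wstar)) := by
        apply mul_le_mul_of_nonneg_left hgap
        positivity
    _ = 4 * n ^ 2 * Lbar * (F w - F wstar) := by ring
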